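/- Let n ≥ 1, let H and A be n×n Hermitian complex matrices, and define the Gibbs states ω = Matrix.exp H / Re (Matrix.trace (Matrix.exp H)) and ψ = Matrix.exp (H + A) / Re (Matrix.trace (Matrix.exp (H + A))). Then for every n×n positive definite Hermitian matrix ρ of trace 1: S(ρ‖ψ) = S(ρ‖ω) − Re (Matrix.trace (ρ * A)) + Real.log (Re (Matrix.trace (Matrix.exp (H + A))) / Re (Matrix.trace (Matrix.exp H))). (This is the finite-dimensional version of the perturbation identity (equation (9)/(rentid)) at the heart of the proof of the paper's Theorem 2, relating the relative entropies with respect to a reference Gibbs state and its perturbation by a bounded relative Hamiltonian A.) -/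

import Mathlib

open scoped ComplexOrder

/-- The matrix logarithm of a Hermitian complex matrix, defined through the continuous
functional calculus: apply `Real.log` to the eigenvalues in a spectral decomposition
(junk value `0` for non-Hermitian matrices). -/
noncomputable def matLog {n : ℕ} (M : Matrix (Fin n) (Fin n) ℂ) :
    Matrix (Fin n) (Fin n) ℂ :=
  if hM : M.IsHermitian then
    (hM.eigenvectorUnitary : Matrix (Fin n) (Fin n) ℂ) *
      Matrix.diagonal (fun i => (Real.log (hM.eigenvalues i) : ℂ)) *
      star (hM.eigenvectorUnitary : Matrix (Fin n) (Fin n) ℂ)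
  else 0

/-- The quantum relative entropy `S(ρ‖σ) = Re (Tr (ρ (log ρ − log σ)))` of two density
matrices. -/
noncomputable def relEnt {n : ℕ} (ρ σ : Matrix (Fin n) (Fin n) ℂ) : ℝ :=
  (Matrix.trace (ρ * (matLog ρ - matLog σ))).re

lemma matLog_eq_cfc {n : ℕ} {M : Matrix (Fin n) (Fin n) ℂ} (hM : M.IsHermitian) :
    matLog M = cfc Real.log M := by
  rw [matLog, dif_pos hM, hM.cfc_eq, Matrix.IsHermitian.cfc]
  rfl

lemma exp_eq_cfc {n : ℕ} {M : Matrix (Fin n) (Fin n) ℂ} (hM : M.IsHermitian) :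
    NormedSpace.exp M = cfc Real.exp M := by
  rw [hM.cfc_eq, Matrix.IsHermitian.cfc, Unitary.conjStarAlgAut_apply]
  set U : Matrix (Fin n) (Fin n) ℂ := (hM.eigenvectorUnitary : Matrix (Fin n) (Fin n) ℂ) with hU
  have h2 : star U * U = 1 := Matrix.mem_unitaryGroup_iff'.mp hM.eigenvectorUnitary.2
  have h1 : U * star U = 1 := Matrix.mem_unitaryGroup_iff.mp hM.eigenvectorUnitary.2
  have hinv : U⁻¹ = star U := Matrix.inv_eq_left_inv h2
  conv_lhs => rw [hM.spectral_theorem, Unitary.conjStarAlgAut_apply, ← hU, ← hinv]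
  rw [Matrix.exp_conj _ _ ⟨⟨U, star U, h1, h2⟩, rfl⟩, hinv,
    Matrix.exp_diagonal]
  have hd : NormedSpace.exp (RCLike.ofReal ∘ hM.eigenvalues) =
      ((RCLike.ofReal ∘ Real.exp ∘ hM.eigenvalues : Fin n → ℂ)) := by
    funext i
    rw [Pi.coe_exp]
    simp only [Function.comp_apply, ← Complex.exp_eq_exp_ℂ]
    rw [show ((RCLike.ofReal : ℝ → ℂ) (Real.exp (hM.eigenvalues i))) =
      ((Real.exp (hM.eigenvalues i) : ℝ) : ℂ) from rfl, Complex.ofReal_exp]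
    rfl
  rw [hd]

lemma matLog_smul_exp {n : ℕ} {M : Matrix (Fin n) (Fin n) ℂ} (hM : M.IsHermitian)
    {c : ℝ} (hc : 0 < c) :
    matLog (c • NormedSpace.exp M) =
      (Real.log c : ℂ) • (1 : Matrix (Fin n) (Fin n) ℂ) + M := by
  have hMsa : IsSelfAdjoint M := hM
  have hP : c • NormedSpace.exp M = cfc (fun x => c * Real.exp x) M := by
    rw [exp_eq_cfc hM, ← cfc_const_mul c Real.exp M (by fun_prop)]
  have hPh : (c • NormedSpace.exp M).IsHermitian := by
    rw [hP]; exact cfc_predicate _ M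
  have hlog : ContinuousOn Real.log ((fun x => c * Real.exp x) '' spectrum ℝ M) := by
    apply Real.continuousOn_log.mono
    rintro y ⟨x, -, rfl⟩
    exact (mul_pos hc (Real.exp_pos x)).ne' ∘ (by simpa using ·)
  rw [matLog_eq_cfc hPh, hP,
    ← cfc_comp Real.log (fun x => c * Real.exp x) M hMsa hlog (by fun_prop)]
  have hfun : Real.log ∘ (fun x => c * Real.exp x) = fun x => Real.log c + id x := by
    funext x
    simp [Real.log_mul (ne_of_gt hc) (Real.exp_ne_zero x), Real.log_exp]
  rw [hfun, cfc_const_add (Real.log c) id M (by fun_prop) hMsa, cfc_id ℝ M hMsa]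
  congr 1
  rw [Algebra.algebraMap_eq_smul_one]
  ext i j
  simp [Matrix.smul_apply, Complex.real_smul]

lemma trace_exp_re_pos {n : ℕ} (hn : 1 ≤ n) {M : Matrix (Fin n) (Fin n) ℂ}
    (hM : M.IsHermitian) : 0 < (Matrix.trace (NormedSpace.exp M)).re := by
  rw [exp_eq_cfc hM, hM.cfc_eq, Matrix.IsHermitian.cfc, Unitary.conjStarAlgAut_apply, Matrix.trace_mul_cycle,
    Matrix.mem_unitaryGroup_iff'.mp hM.eigenvectorUnitary.2, one_mul,
    Matrix.trace_diagonal]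
  have : ((∑ i, (RCLike.ofReal ∘ Real.exp ∘ hM.eigenvalues) i : ℂ)).re
      = ∑ i, Real.exp (hM.eigenvalues i) := by
    rw [Complex.re_sum]
    simp [Function.comp, Complex.exp_ofReal_re]
  rw [this]
  exact Finset.sum_pos (fun i _ => Real.exp_pos _)
    (Finset.univ_nonempty_iff.mpr ⟨⟨0, hn⟩⟩)

/-- **Perturbation identity for the relative entropy** (finite-dimensional version of
equation (9)/(rentid) in the proof of Theorem 2): for Hermitian `H`, `A`, the Gibbs
states `ω = exp H / Re (Tr (exp H))` and `ψ = exp (H+A) / Re (Tr (exp (H+A)))`, and any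
positive definite density matrix `ρ`,
`S(ρ‖ψ) = S(ρ‖ω) − Re (Tr (ρ A)) + log (Re (Tr (exp (H+A))) / Re (Tr (exp H)))`. -/
theorem relEnt_perturbation {n : ℕ} (hn : 1 ≤ n)
    (H A : Matrix (Fin n) (Fin n) ℂ) (hH : H.IsHermitian) (hA : A.IsHermitian)
    (ω ψ : Matrix (Fin n) (Fin n) ℂ)
    (hω : ω = ((Matrix.trace (NormedSpace.exp H)).re)⁻¹ • NormedSpace.exp H)
    (hψ : ψ = ((Matrix.trace (NormedSpace.exp (H + A))).re)⁻¹ •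
      NormedSpace.exp (H + A))
    (ρ : Matrix (Fin n) (Fin n) ℂ) (hρ : ρ.PosDef) (hρtr : Matrix.trace ρ = 1) :
    relEnt ρ ψ = relEnt ρ ω - (Matrix.trace (ρ * A)).re +
      Real.log ((Matrix.trace (NormedSpace.exp (H + A))).re
        / (Matrix.trace (NormedSpace.exp H)).re) := by
  unfold relEnt
  set t : ℝ := (Matrix.trace (NormedSpace.exp H)).re with htdef
  set t' : ℝ := (Matrix.trace (NormedSpace.exp (H + A))).re with ht'def
  have ht : 0 < t := trace_exp_re_pos hn hH
  have ht' : 0 < t' := trace_exp_re_pos hn (hH.add hA)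
  have hlogω : matLog ω = (Real.log t⁻¹ : ℂ) • 1 + H := by
    rw [hω]; exact matLog_smul_exp hH (inv_pos.mpr ht)
  have hlogψ : matLog ψ = (Real.log t'⁻¹ : ℂ) • 1 + (H + A) := by
    rw [hψ]; exact matLog_smul_exp (hH.add hA) (inv_pos.mpr ht')
  rw [hlogω, hlogψ]
  simp only [Matrix.mul_sub, Matrix.mul_add, Matrix.mul_smul, Matrix.mul_one,
    Matrix.trace_sub, Matrix.trace_add, Matrix.trace_smul, hρtr, smul_eq_mul, mul_one,
    Complex.sub_re, Complex.add_re, Complex.ofReal_re]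
  rw [Real.log_inv, Real.log_inv, Real.log_div ht'.ne' ht.ne']
  ring
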